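/- Let E ⊂ ℝⁿ with n ≥ 2 be a set, and f : E → ℝ a function such that |f(x) − f(y)| ≤ C ‖x − y‖ⁿ for all x, y ∈ E and some constant C. Then f(E) has Lebesgue measure zero in ℝ. -/

import Mathlib

open MeasureTheory Metric Set Filter
open scoped ENNReal NNReal Topology

namespace FerryAux

variable {n : ℕ}

def Hol (f : EuclideanSpace ℝ (Fin n) → ℝ) (S : Set (EuclideanSpace ℝ (Fin n)))
    (q r : ℝ) : Prop :=
  ∀ x ∈ S, ∀ y ∈ S, dist x y ≤ r → |f x - f y| ≤ q * dist x y ^ n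

lemma Hol.mono {f : EuclideanSpace ℝ (Fin n) → ℝ} {S T : Set (EuclideanSpace ℝ (Fin n))}
    {q r : ℝ} (hH : Hol f S q r) (hTS : T ⊆ S) : Hol f T q r :=
  fun x hx y hy hd => hH x (hTS hx) y (hTS hy) hd

noncomputable def uB (n : ℕ) : ℝ≥0∞ :=
  volume (closedBall (0 : EuclideanSpace ℝ (Fin n)) 1)

lemma uB_pos (n : ℕ) : 0 < uB n :=
  measure_closedBall_pos volume _ one_pos

lemma uB_ne_top (n : ℕ) : uB n ≠ ⊤ :=
  measure_closedBall_lt_top.ne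

lemma vol_cb (x : EuclideanSpace ℝ (Fin n)) {ρ : ℝ} (hρ : 0 ≤ ρ) :
    volume (closedBall x ρ) = ENNReal.ofReal (ρ ^ n) * uB n := by
  rw [uB, Measure.addHaar_closedBall' volume x hρ, finrank_euclideanSpace_fin]

lemma cover_bound {f : EuclideanSpace ℝ (Fin n) → ℝ} {S : Set (EuclideanSpace ℝ (Fin n))}
    {q r : ℝ} (hq : 0 < q) (hr : 0 < r) (hH : Hol f S q r) :
    uB n * volume (f '' S) ≤ ENNReal.ofReal (2 * 5 ^ n * q) * volume S := by
  have hc0 : (0:ℝ) < 2 * 5 ^ n * q := by positivity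
  by_cases hStop : volume S = ⊤
  · rw [hStop, ENNReal.mul_top (by simpa using (ENNReal.ofReal_pos.2 hc0).ne')]
    exact le_top
  -- key: bound via any open superset
  have key : ∀ U : Set (EuclideanSpace ℝ (Fin n)), IsOpen U → S ⊆ U →
      uB n * volume (f '' S) ≤ ENNReal.ofReal (2 * 5 ^ n * q) * volume U := by
    intro U hU hSU
    have hch : ∀ x : EuclideanSpace ℝ (Fin n), x ∈ S →
        ∃ ρ' : ℝ, 0 < ρ' ∧ ρ' ≤ r / 5 ∧ closedBall x ρ' ⊆ U := by
      intro x hx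
      rcases Metric.isOpen_iff.1 hU x (hSU hx) with ⟨δ, δpos, hδ⟩
      refine ⟨min (δ / 2) (r / 5), by positivity, min_le_right _ _, ?_⟩
      exact (closedBall_subset_ball (lt_of_le_of_lt (min_le_left _ _) (by linarith))).trans hδ
    choose! ρ ρpos ρle ρU using hch
    obtain ⟨u, huS, hdisj, hcov⟩ :=
      Vitali.exists_disjoint_subfamily_covering_enlargement_closedBall S id ρ (r / 5)
        (fun a ha => ρle a ha) 4 (by norm_num)
    simp only [id] at hdisj hcov
    have hucount : u.Countable := by
      refine hdisj.countable_of_nonempty_interior (fun b hb => ?_)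
      exact ⟨b, ball_subset_interior_closedBall (mem_ball_self (ρpos b (huS hb)))⟩
    have hScov : S ⊆ ⋃ b ∈ u, closedBall b (4 * ρ b) := by
      intro a ha
      rcases hcov a ha with ⟨b, hbu, hb⟩
      exact mem_biUnion hbu (hb (mem_closedBall_self (ρpos a ha).le))
    have himg : f '' S ⊆
        ⋃ b ∈ u, Icc (f b - q * (4 * ρ b) ^ n) (f b + q * (4 * ρ b) ^ n) := by
      rintro - ⟨a, ha, rfl⟩
      obtain ⟨b, hbu, hab⟩ : ∃ b ∈ u, a ∈ closedBall b (4 * ρ b) := by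
        simpa using hScov ha
      have hbS : b ∈ S := huS hbu
      have hdist : dist a b ≤ 4 * ρ b := mem_closedBall.1 hab
      have hdr : dist a b ≤ r := hdist.trans (by
        have := ρle b hbS; linarith)
      have habs : |f a - f b| ≤ q * (4 * ρ b) ^ n := by
        refine (hH a ha b hbS hdr).trans ?_
        have : dist a b ^ n ≤ (4 * ρ b) ^ n :=
          pow_le_pow_left₀ dist_nonneg hdist n
        exact mul_le_mul_of_nonneg_left this hq.le
      have := abs_sub_le_iff.1 habs
      exact mem_biUnion hbu ⟨by linarith [this.2], by linarith [this.1]⟩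
    have hmeas : volume (f '' S) ≤
        ∑' b : u, volume (Icc (f b - q * (4 * ρ (↑b)) ^ n) (f b + q * (4 * ρ (↑b)) ^ n)) :=
      (measure_mono himg).trans (measure_biUnion_le volume hucount _)
    have hterm : ∀ b : EuclideanSpace ℝ (Fin n), b ∈ u →
        uB n * volume (Icc (f b - q * (4 * ρ b) ^ n) (f b + q * (4 * ρ b) ^ n))
          ≤ ENNReal.ofReal (2 * 5 ^ n * q) * volume (closedBall b (ρ b)) := by
      intro b hbu
      have hρb : 0 ≤ ρ b := (ρpos b (huS hbu)).le
      rw [Real.volume_Icc, vol_cb b hρb]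
      have h1 : (f b + q * (4 * ρ b) ^ n) - (f b - q * (4 * ρ b) ^ n)
          = 2 * (4:ℝ) ^ n * q * ρ b ^ n := by ring
      rw [h1, ← mul_assoc, mul_comm (uB n), mul_comm (ENNReal.ofReal (2 * 5 ^ n * q))]
      -- goal: ofReal (2*4^n*q*ρb^n) * uB n ≤ ofReal (ρ b ^ n) * ofReal (2*5^n*q) * uB n
      refine mul_le_mul_left ?_ (uB n)
      rw [← ENNReal.ofReal_mul (by positivity)]
      refine ENNReal.ofReal_le_ofReal ?_
      have h45 : (4:ℝ) ^ n ≤ 5 ^ n := pow_le_pow_left₀ (by norm_num) (by norm_num) n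
      have hρn : (0:ℝ) ≤ ρ b ^ n := by positivity
      nlinarith [mul_le_mul_of_nonneg_right h45 hρn]
    calc uB n * volume (f '' S)
        ≤ uB n * ∑' b : u, volume
            (Icc (f b - q * (4 * ρ (↑b)) ^ n) (f b + q * (4 * ρ (↑b)) ^ n)) :=
          mul_le_mul_right hmeas _
      _ = ∑' b : u, uB n * volume
            (Icc (f b - q * (4 * ρ (↑b)) ^ n) (f b + q * (4 * ρ (↑b)) ^ n)) :=
          ENNReal.tsum_mul_left.symm
      _ ≤ ∑' b : u, ENNReal.ofReal (2 * 5 ^ n * q) * volume (closedBall (↑b : EuclideanSpace ℝ (Fin n)) (ρ ↑b)) :=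
          ENNReal.tsum_le_tsum (fun b => hterm b b.2)
      _ = ENNReal.ofReal (2 * 5 ^ n * q) * ∑' b : u, volume (closedBall (↑b : EuclideanSpace ℝ (Fin n)) (ρ ↑b)) :=
          ENNReal.tsum_mul_left
      _ = ENNReal.ofReal (2 * 5 ^ n * q) * volume (⋃ b ∈ u, closedBall b (ρ b)) := by
          rw [measure_biUnion hucount hdisj (fun b _ => measurableSet_closedBall)]
      _ ≤ ENNReal.ofReal (2 * 5 ^ n * q) * volume U := by
          refine mul_le_mul_right (measure_mono ?_) _
          exact iUnion₂_subset (fun b hb => ρU b (huS hb))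
  -- conclude via outer regularity
  refine ENNReal.le_of_forall_pos_le_add (fun ε hε hlt => ?_)
  have hcne : ENNReal.ofReal (2 * 5 ^ n * q) ≠ 0 := by
    simpa using (ENNReal.ofReal_pos.2 hc0).ne'
  have hcnetop : ENNReal.ofReal (2 * 5 ^ n * q) ≠ ⊤ := ENNReal.ofReal_ne_top
  have hδpos : (0:ℝ≥0∞) < (ε:ℝ≥0∞) / ENNReal.ofReal (2 * 5 ^ n * q) :=
    ENNReal.div_pos (by exact_mod_cast hε.ne') hcnetop
  have hlt2 : volume S < volume S + (ε:ℝ≥0∞) / ENNReal.ofReal (2 * 5 ^ n * q) :=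
    ENNReal.lt_add_right hStop hδpos.ne'
  obtain ⟨U, hSU, hUopen, hUlt⟩ := Set.exists_isOpen_lt_of_lt S _ hlt2
  refine (key U hUopen hSU).trans ?_
  calc ENNReal.ofReal (2 * 5 ^ n * q) * volume U
      ≤ ENNReal.ofReal (2 * 5 ^ n * q) *
        (volume S + (ε:ℝ≥0∞) / ENNReal.ofReal (2 * 5 ^ n * q)) :=
        mul_le_mul_right hUlt.le _
    _ = ENNReal.ofReal (2 * 5 ^ n * q) * volume S +
        ENNReal.ofReal (2 * 5 ^ n * q) * ((ε:ℝ≥0∞) / ENNReal.ofReal (2 * 5 ^ n * q)) := by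
        rw [mul_add]
    _ ≤ ENNReal.ofReal (2 * 5 ^ n * q) * volume S + ε := add_le_add_right ENNReal.mul_div_le _


/-- The set of uniform density points of `S` at scales below `1/(k+1)`. -/
def good (n : ℕ) (S : Set (EuclideanSpace ℝ (Fin n))) (k : ℕ) :
    Set (EuclideanSpace ℝ (Fin n)) :=
  {x | x ∈ S ∧ ∀ ρ : ℝ, 0 < ρ → ρ ≤ 1 / (k + 1) →
    volume (closedBall x ρ) ≤ volume (S ∩ closedBall x ρ) +
      ENNReal.ofReal ((1 / 16) ^ n / 2) * volume (closedBall x ρ)}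

lemma good_subset {S : Set (EuclideanSpace ℝ (Fin n))} {k : ℕ} : good n S k ⊆ S :=
  fun _ hx => hx.1

lemma good_mono {S : Set (EuclideanSpace ℝ (Fin n))} : Monotone (good n S) := by
  intro k l hkl x hx
  refine ⟨hx.1, fun ρ hρ0 hρle => hx.2 ρ hρ0 (hρle.trans ?_)⟩
  rw [div_le_div_iff₀ (by positivity) (by positivity)]
  have : (k:ℝ) ≤ l := Nat.cast_le.2 hkl
  linarith

lemma improve (hn : 2 ≤ n) {f : EuclideanSpace ℝ (Fin n) → ℝ}
    {S : Set (EuclideanSpace ℝ (Fin n))} {q r : ℝ} (hq : 0 ≤ q)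
    (hH : Hol f S q r) (k : ℕ) :
    Hol f (good n S k) (2 * (9/16) ^ n * q) (min r (1 / (k + 1))) := by
  intro x hx y hy hd
  rcases eq_or_lt_of_le (dist_nonneg (x := x) (y := y)) with h0 | h0
  · have hxy : x = y := dist_eq_zero.1 h0.symm
    subst hxy
    simp only [dist_self, sub_self, abs_zero]
    rw [zero_pow (by omega : n ≠ 0), mul_zero]
  set d := dist x y with hd_def
  set m := midpoint ℝ x y with hm_def
  have hdx : dist x m = d / 2 := by
    rw [hm_def, dist_left_midpoint, Real.norm_two, hd_def]; ring
  have hdy : dist y m = d / 2 := by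
    rw [hm_def, midpoint_comm, dist_left_midpoint, Real.norm_two, hd_def, dist_comm]; ring
  have hdr : d ≤ r := hd.trans (min_le_left _ _)
  have hd1 : d ≤ 1 / (k + 1) := hd.trans (min_le_right _ _)
  -- find a point of S near the midpoint
  have hw : (S ∩ closedBall m ((1/16) * d)).Nonempty := by
    by_contra hemp
    rw [Set.not_nonempty_iff_eq_empty] at hemp
    have hsub : closedBall m ((1/16) * d) ⊆ closedBall x d := by
      intro z hz
      have h1 : dist z m ≤ (1/16) * d := mem_closedBall.1 hz
      have h2 : dist z x ≤ dist z m + dist m x := dist_triangle z m x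
      rw [mem_closedBall]
      rw [dist_comm] at hdx
      linarith
    have hdisj2 : Disjoint (S ∩ closedBall x d) (closedBall m ((1/16) * d)) := by
      rw [Set.disjoint_left]
      intro z hz1 hz2
      have : z ∈ S ∩ closedBall m ((1/16) * d) := ⟨hz1.1, hz2⟩
      rw [hemp] at this
      exact this
    have hunion : volume (S ∩ closedBall x d) + volume (closedBall m ((1/16) * d))
        ≤ volume (closedBall x d) := by
      rw [← measure_union hdisj2 measurableSet_closedBall]
      exact measure_mono (union_subset (inter_subset_right.trans (subset_refl _)) hsub)
    have hgood := hx.2 d h0 hd1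
    have hVtop : volume (closedBall x d) ≠ ⊤ := measure_closedBall_lt_top.ne
    have h1 : volume (closedBall x d) + volume (closedBall m ((1/16) * d)) ≤
        volume (closedBall x d) +
          ENNReal.ofReal ((1/16) ^ n / 2) * volume (closedBall x d) := by
      calc volume (closedBall x d) + volume (closedBall m ((1/16) * d))
          ≤ (volume (S ∩ closedBall x d) +
              ENNReal.ofReal ((1/16) ^ n / 2) * volume (closedBall x d)) +
              volume (closedBall m ((1/16) * d)) := add_le_add_left hgood _
        _ = (volume (S ∩ closedBall x d) + volume (closedBall m ((1/16) * d))) +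
              ENNReal.ofReal ((1/16) ^ n / 2) * volume (closedBall x d) := by ring
        _ ≤ volume (closedBall x d) +
              ENNReal.ofReal ((1/16) ^ n / 2) * volume (closedBall x d) :=
            add_le_add_left hunion _
    have h2 : volume (closedBall m ((1/16) * d)) ≤
        ENNReal.ofReal ((1/16) ^ n / 2) * volume (closedBall x d) :=
      (ENNReal.add_le_add_iff_left hVtop).1 h1
    rw [vol_cb m (by positivity), vol_cb x h0.le] at h2
    rw [← mul_assoc, ← ENNReal.ofReal_mul (by positivity)] at h2
    have h3 : ((1/16) * d) ^ n ≤ (1/16) ^ n / 2 * d ^ n := by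
      have h2' := (ENNReal.mul_le_mul_iff_left (uB_pos n).ne' (uB_ne_top n)).1 h2
      exact (ENNReal.ofReal_le_ofReal_iff (by positivity)).1 h2'
    rw [mul_pow] at h3
    nlinarith [pow_pos (show (0:ℝ) < 1/16 by norm_num) n, pow_pos h0 n]
  obtain ⟨w, hwS, hwb⟩ := hw
  have hwm : dist w m ≤ (1/16) * d := mem_closedBall.1 hwb
  have hxw : dist x w ≤ (9/16) * d := by
    have := dist_triangle x m w
    rw [dist_comm m w] at this
    linarith
  have hyw : dist y w ≤ (9/16) * d := by
    have := dist_triangle y m w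
    rw [dist_comm m w] at this
    linarith
  have hd0 : (0:ℝ) ≤ d := h0.le
  have hb1 : |f x - f w| ≤ q * ((9/16) * d) ^ n := by
    refine (hH x hx.1 w hwS (hxw.trans (by linarith))).trans ?_
    exact mul_le_mul_of_nonneg_left (pow_le_pow_left₀ dist_nonneg hxw n) hq
  have hb2 : |f y - f w| ≤ q * ((9/16) * d) ^ n := by
    refine (hH y hy.1 w hwS (hyw.trans (by linarith))).trans ?_
    exact mul_le_mul_of_nonneg_left (pow_le_pow_left₀ dist_nonneg hyw n) hq
  calc |f x - f y| ≤ |f x - f w| + |f w - f y| := abs_sub_le _ _ _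
    _ ≤ q * ((9/16) * d) ^ n + q * ((9/16) * d) ^ n := by
        rw [abs_sub_comm (f w)]; exact add_le_add hb1 hb2
    _ = 2 * (9/16) ^ n * q * d ^ n := by rw [mul_pow]; ring


lemma good_ae (S : Set (EuclideanSpace ℝ (Fin n))) :
    volume (S \ ⋃ k, good n S k) = 0 := by
  have hae := Besicovitch.ae_tendsto_measure_inter_div
    (volume : Measure (EuclideanSpace ℝ (Fin n))) S
  set P : EuclideanSpace ℝ (Fin n) → Prop := fun x =>
    Tendsto (fun ρ => volume (S ∩ closedBall x ρ) / volume (closedBall x ρ))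
      (𝓝[>] 0) (𝓝 1) with hP
  set h2 : ℝ≥0∞ := ENNReal.ofReal ((1/16) ^ n / 2) with hh2
  have h2pos : 0 < h2 := ENNReal.ofReal_pos.2 (by positivity)
  have h2le : h2 ≤ 1 := by
    rw [hh2, ← ENNReal.ofReal_one]
    refine ENNReal.ofReal_le_ofReal ?_
    have : ((1:ℝ)/16) ^ n ≤ 1 := pow_le_one₀ (by norm_num) (by norm_num)
    linarith
  have main : ∀ x, P x → x ∈ S → x ∈ ⋃ k, good n S k := by
    intro x hx hxS
    have hnb : Ioi (1 - h2) ∈ 𝓝 (1:ℝ≥0∞) :=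
      isOpen_Ioi.mem_nhds (ENNReal.sub_lt_self ENNReal.one_ne_top one_ne_zero h2pos.ne')
    have hev : ∀ᶠ ρ in 𝓝[>] (0:ℝ),
        volume (S ∩ closedBall x ρ) / volume (closedBall x ρ) ∈ Ioi (1 - h2) :=
      hx (by exact hnb)
    rw [eventually_iff, mem_nhdsGT_iff_exists_Ioc_subset] at hev
    obtain ⟨δ, hδ0, hδsub⟩ := hev
    obtain ⟨k, hk⟩ := exists_nat_one_div_lt (show (0:ℝ) < δ from hδ0)
    refine mem_iUnion.2 ⟨k, hxS, fun ρ hρ0 hρle => ?_⟩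
    have hρδ : ρ ∈ Ioc (0:ℝ) δ := ⟨hρ0, hρle.trans hk.le⟩
    have hratio : 1 - h2 <
        volume (S ∩ closedBall x ρ) / volume (closedBall x ρ) := hδsub hρδ
    have hB0 : volume (closedBall x ρ) ≠ 0 := (measure_closedBall_pos volume x hρ0).ne'
    have hBt : volume (closedBall x ρ) ≠ ⊤ := measure_closedBall_lt_top.ne
    have hle : (1 - h2) * volume (closedBall x ρ) ≤ volume (S ∩ closedBall x ρ) := by
      have := (ENNReal.lt_div_iff_mul_lt (Or.inl hB0) (Or.inl hBt)).1 hratio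
      exact this.le
    calc volume (closedBall x ρ)
        = ((1 - h2) + h2) * volume (closedBall x ρ) := by
          rw [tsub_add_cancel_of_le h2le, one_mul]
      _ = (1 - h2) * volume (closedBall x ρ) + h2 * volume (closedBall x ρ) := by
          rw [add_mul]
      _ ≤ volume (S ∩ closedBall x ρ) + h2 * volume (closedBall x ρ) :=
          add_le_add_left hle _
  have h0 : (volume.restrict S) {x | ¬ P x} = 0 := by
    exact ae_iff.1 hae
  set A' := toMeasurable (volume.restrict S) {x | ¬ P x} with hA'
  have hA'meas : MeasurableSet A' := measurableSet_toMeasurable _ _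
  have hA'0 : volume (A' ∩ S) = 0 := by
    rw [← Measure.restrict_apply hA'meas, hA', measure_toMeasurable]
    exact h0
  refine measure_mono_null ?_ hA'0
  intro x hx
  refine ⟨subset_toMeasurable _ _ ?_, hx.1⟩
  exact fun hPx => hx.2 (main x hPx hx.1)


lemma iter (hn : 2 ≤ n) (f : EuclideanSpace ℝ (Fin n) → ℝ) :
    ∀ (m : ℕ) (S : Set (EuclideanSpace ℝ (Fin n))) (q r : ℝ), 0 < q → 0 < r →
      Hol f S q r →
      uB n * volume (f '' S) ≤
        ENNReal.ofReal (2 * 5 ^ n * ((2 * (9/16) ^ n) ^ m * q)) * volume S := by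
  intro m
  induction m with
  | zero =>
    intro S q r hq hr hH
    simpa using cover_bound hq hr hH
  | succ m ih =>
    intro S q r hq hr hH
    have hτpos : (0:ℝ) < 2 * (9/16) ^ n := by positivity
    -- the bad set has null image
    have hbadnull : volume (f '' (S \ ⋃ k, good n S k)) = 0 := by
      have hb := cover_bound hq hr (hH.mono (diff_subset (t := ⋃ k, good n S k)))
      rw [good_ae S, mul_zero] at hb
      have := le_antisymm hb zero_le
      rcases mul_eq_zero.1 this with h | h
      · exact absurd h (uB_pos n).ne'
      · exact h
    have hcov : f '' S ⊆ f '' (S \ ⋃ k, good n S k) ∪ ⋃ k, f '' good n S k := by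
      rintro - ⟨a, ha, rfl⟩
      by_cases h : a ∈ ⋃ k, good n S k
      · obtain ⟨k, hk⟩ := mem_iUnion.1 h
        exact Or.inr (mem_iUnion.2 ⟨k, mem_image_of_mem f hk⟩)
      · exact Or.inl (mem_image_of_mem f ⟨ha, h⟩)
    have hmono : Monotone (fun k => f '' good n S k) :=
      fun k l hkl => image_mono (good_mono hkl)
    calc uB n * volume (f '' S)
        ≤ uB n * (volume (f '' (S \ ⋃ k, good n S k)) + volume (⋃ k, f '' good n S k)) :=
          mul_le_mul_right ((measure_mono hcov).trans (measure_union_le _ _)) _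
      _ = uB n * volume (⋃ k, f '' good n S k) := by rw [hbadnull, zero_add]
      _ = uB n * ⨆ k, volume (f '' good n S k) := by rw [hmono.measure_iUnion]
      _ = ⨆ k, uB n * volume (f '' good n S k) := ENNReal.mul_iSup _ _
      _ ≤ ENNReal.ofReal (2 * 5 ^ n * ((2 * (9/16) ^ n) ^ (m+1) * q)) * volume S := by
          refine iSup_le (fun k => ?_)
          have hik := ih (good n S k) (2 * (9/16) ^ n * q) (min r (1 / (k + 1)))
            (by positivity) (lt_min hr (by positivity)) (improve hn hq.le hH k)
          refine hik.trans ?_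
          have hconst : (2 * 5 ^ n * ((2 * ((9:ℝ)/16) ^ n) ^ m * (2 * (9/16) ^ n * q)))
              = 2 * 5 ^ n * ((2 * (9/16) ^ n) ^ (m+1) * q) := by ring
          rw [hconst]
          exact mul_le_mul_right (measure_mono good_subset) _


lemma piece_null (hn : 2 ≤ n) (f : EuclideanSpace ℝ (Fin n) → ℝ)
    {S : Set (EuclideanSpace ℝ (Fin n))} {q : ℝ} (hq : 0 < q)
    (hH : Hol f S q 1) (hV : volume S ≠ ⊤) :
    volume (f '' S) = 0 := by
  have hτ1 : 2 * ((9:ℝ)/16) ^ n < 1 := by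
    have h1 : ((9:ℝ)/16) ^ n ≤ (9/16) ^ 2 :=
      pow_le_pow_of_le_one (by norm_num) (by norm_num) hn
    nlinarith
  have hτ0 : (0:ℝ) ≤ 2 * (9/16) ^ n := by positivity
  have hlim : Tendsto
      (fun m : ℕ => ENNReal.ofReal (2 * 5 ^ n * ((2 * ((9:ℝ)/16) ^ n) ^ m * q)) * volume S)
      atTop (𝓝 0) := by
    have h1 : Tendsto (fun m : ℕ => (2 * ((9:ℝ)/16) ^ n) ^ m) atTop (𝓝 0) :=
      tendsto_pow_atTop_nhds_zero_of_lt_one hτ0 hτ1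
    have h2 : Tendsto (fun m : ℕ => 2 * (5:ℝ) ^ n * ((2 * ((9:ℝ)/16) ^ n) ^ m * q))
        atTop (𝓝 0) := by
      have := (h1.mul_const q).const_mul (2 * (5:ℝ) ^ n)
      simpa using this
    have h3 := ENNReal.tendsto_ofReal h2
    rw [ENNReal.ofReal_zero] at h3
    have h4 := ENNReal.Tendsto.mul_const h3 (Or.inr hV)
    simpa using h4
  have hineq : ∀ m : ℕ, uB n * volume (f '' S) ≤
      ENNReal.ofReal (2 * 5 ^ n * ((2 * ((9:ℝ)/16) ^ n) ^ m * q)) * volume S :=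
    fun m => iter hn f m S q 1 hq one_pos hH
  have hle0 : uB n * volume (f '' S) ≤ 0 :=
    ge_of_tendsto hlim (Filter.Eventually.of_forall hineq)
  have h0 : uB n * volume (f '' S) = 0 := le_antisymm hle0 zero_le
  rcases mul_eq_zero.1 h0 with h | h
  · exact absurd h (uB_pos n).ne'
  · exact h

end FerryAux

open MeasureTheory FerryAux Metric Set

/-- Ferry's Lemma: if `f` satisfies `|f x - f y| ≤ C ‖x - y‖ ^ n` on a subset `E`
of `ℝⁿ`, `n ≥ 2`, then `f '' E` has Lebesgue measure zero in `ℝ`. -/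
theorem ferry_lemma {n : ℕ} (hn : 2 ≤ n)
    (E : Set (EuclideanSpace ℝ (Fin n))) (f : EuclideanSpace ℝ (Fin n) → ℝ) (C : ℝ)
    (hf : ∀ x ∈ E, ∀ y ∈ E, |f x - f y| ≤ C * ‖x - y‖ ^ n) :
    volume (f '' E) = 0 := by
  set q : ℝ := |C| + 1 with hq_def
  have hq : 0 < q := by positivity
  have hEU : E = ⋃ R : ℕ, E ∩ closedBall 0 (R + 1) := by
    ext x
    constructor
    · intro hx
      obtain ⟨R, hR⟩ := exists_nat_ge ‖x‖
      refine mem_iUnion.2 ⟨R, hx, ?_⟩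
      rw [mem_closedBall, dist_zero_right]
      linarith
    · rintro hx
      obtain ⟨R, hR, -⟩ := mem_iUnion.1 hx
      exact hR
  rw [hEU, image_iUnion]
  refine measure_iUnion_null (fun R => ?_)
  refine piece_null hn f hq ?_ ?_
  · intro x hx y hy _
    rw [dist_eq_norm]
    refine (hf x hx.1 y hy.1).trans ?_
    have hnn : (0:ℝ) ≤ ‖x - y‖ ^ n := by positivity
    have : C ≤ q := by rw [hq_def]; cases abs_cases C <;> linarith
    nlinarith
  · exact ne_top_of_le_ne_top measure_closedBall_lt_top.ne
      (measure_mono inter_subset_right)
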